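/- Let $\theta^1 > \cdots > \theta^K \geq 0$ with full-support prior $\mu_0$ and production cost $c$ satisfying $\theta^K \le c < \theta^1$ and $\mathbb{E}[\theta] > c$. Define $w_k^N(q) = \max\{v_k^N(q) - c, 0\}$ where $v_k^N$ is the sequential self-conquering skepticism posterior mean. Then there exists a unique pair $(k^*, q^*)$ with $1 \le k^* \le K$, $q^* \in [0,1]$, such that $\theta^{k^*}$ is the highest type for which $w_{k^*}^N(q) = 0$ for some $q \in [0,1]$, and $q^*$ is the minimal such $q$. -/
import Mathlib


open Finset

/-- Sequential self-conquering skepticism posterior mean. -/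
noncomputable def vNk {K : ℕ} (θ μ : Fin K → ℝ) (k : Fin K) (q : ℝ) : ℝ :=
  (μ k * (1 - q) * θ k + ∑ j ∈ univ.filter (fun j => k < j), μ j * θ j) /
    (μ k * (1 - q) + ∑ j ∈ univ.filter (fun j => k < j), μ j)

/-- Sequential self-conquering skepticism value (producer outside value). -/
noncomputable def wNk {K : ℕ} (θ μ : Fin K → ℝ) (c : ℝ) (k : Fin K) (q : ℝ) : ℝ :=
  max (vNk θ μ k q - c) 0

/-- Existence and uniqueness of the tipping point `(k*, q*)`: `k*` is the highest type
(least index) for which the skepticism value hits zero for some `q ∈ [0,1]`, and `q*`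
is the minimal such `q`. -/
theorem stmt_6 (K : ℕ) (hK : 2 ≤ K) (θ μ : Fin K → ℝ) (c : ℝ)
    (hθ : StrictAnti θ) (hθlast : 0 ≤ θ ⟨K - 1, by omega⟩)
    (hμ : ∀ k, 0 < μ k) (hμsum : ∑ k, μ k = 1)
    (hc1 : θ ⟨K - 1, by omega⟩ ≤ c) (hc2 : c < θ ⟨0, by omega⟩)
    (hmean : (∑ k, μ k * θ k) > c) :
    ∃! kq : Fin K × ℝ,
      IsLeast {k : Fin K | ∃ q ∈ Set.Icc (0:ℝ) 1, wNk θ μ c k q = 0} kq.1 ∧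
      IsLeast {q ∈ Set.Icc (0:ℝ) 1 | wNk θ μ c kq.1 q = 0} kq.2 := by
  have hc0 : 0 ≤ c := le_trans hθlast hc1
  set last : Fin K := ⟨K - 1, by omega⟩ with hlast
  have hfilter_last : (univ.filter (fun j => last < j)) = (∅ : Finset (Fin K)) := by
    apply Finset.filter_eq_empty_iff.mpr
    intro j _
    simp only [hlast, Fin.lt_def, not_lt]
    omega
  -- the last type always belongs to S
  have hlast_mem : ∃ q ∈ Set.Icc (0:ℝ) 1, wNk θ μ c last q = 0 := by
    refine ⟨1, by norm_num, ?_⟩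
    simp only [wNk, vNk, hfilter_last, Finset.sum_empty, sub_self, mul_zero, zero_mul,
      add_zero, zero_add, zero_div, zero_sub]
    exact max_eq_right (by linarith)
  set S : Set (Fin K) := {k : Fin K | ∃ q ∈ Set.Icc (0:ℝ) 1, wNk θ μ c k q = 0} with hS
  have hSne : S.Nonempty := ⟨last, hlast_mem⟩
  obtain ⟨kstar, hkS, hkmin⟩ := (wellFounded_lt (α := Fin K)).has_min S hSne
  have hkleast : IsLeast S kstar := ⟨hkS, fun x hx => not_lt.mp (hkmin x hx)⟩
  -- the set of q's for k*
  set T : Set ℝ := {q ∈ Set.Icc (0:ℝ) 1 | wNk θ μ c kstar q = 0} with hT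
  have hTleast : ∃ q, IsLeast T q := by
    by_cases hkl : kstar = last
    · -- then θ kstar ≤ c, so every q works; least is 0
      refine ⟨0, ⟨⟨by norm_num, ?_⟩, fun q hq => hq.1.1⟩⟩
      have hμk := hμ kstar
      simp only [wNk, vNk, hkl, hfilter_last, Finset.sum_empty, add_zero, sub_zero, mul_one]
      rw [mul_comm, mul_div_assoc, div_self (ne_of_gt (hμ last)), mul_one]
      exact max_eq_right (by linarith)
    · -- kstar < last, denominator positive on [0,1], continuity argument
      have hklt : kstar < last := by
        have h1 := kstar.isLt
        have h2 : (kstar : ℕ) ≠ K - 1 := fun h => hkl (Fin.ext h)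
        simp only [hlast, Fin.lt_def]
        omega
      set P : ℝ := ∑ j ∈ univ.filter (fun j => kstar < j), μ j with hP
      have hPpos : 0 < P := by
        apply Finset.sum_pos (fun j _ => hμ j)
        exact ⟨last, by simpa using hklt⟩
      have hD : ∀ q ∈ Set.Icc (0:ℝ) 1,
          μ kstar * (1 - q) + P ≠ 0 := by
        intro q hq
        have : 0 ≤ μ kstar * (1 - q) := mul_nonneg (le_of_lt (hμ kstar)) (by linarith [hq.2])
        positivity
      have hv : ContinuousOn (fun q => vNk θ μ kstar q) (Set.Icc (0:ℝ) 1) := by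
        unfold vNk
        exact ContinuousOn.div (by fun_prop) (by fun_prop) hD
      have hcont : ContinuousOn (fun q => wNk θ μ c kstar q) (Set.Icc (0:ℝ) 1) := by
        unfold wNk
        exact (hv.sub continuousOn_const).sup continuousOn_const
      have hTclosed : IsClosed T := by
        have : T = Set.Icc (0:ℝ) 1 ∩ (fun q => wNk θ μ c kstar q) ⁻¹' {0} := by
          ext q; simp [hT, Set.mem_preimage, and_comm]
        rw [this]
        exact hcont.preimage_isClosed_of_isClosed isClosed_Icc isClosed_singleton
      have hTne : T.Nonempty := by
        obtain ⟨q, hq, hw⟩ := hkS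
        exact ⟨q, hq, hw⟩
      have hTbdd : BddBelow T := ⟨0, fun q hq => hq.1.1⟩
      exact ⟨sInf T, hTclosed.csInf_mem hTne hTbdd, fun q hq => csInf_le hTbdd hq⟩
  obtain ⟨qstar, hqleast⟩ := hTleast
  refine ⟨(kstar, qstar), ⟨hkleast, hqleast⟩, ?_⟩
  rintro ⟨k, q⟩ ⟨h1, h2⟩
  have hk : k = kstar := h1.unique hkleast
  subst hk
  have hq : q = qstar := h2.unique hqleast
  subst hq
  rfl
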